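/- arXiv:2305.02023 — 2 statements merged into one kernel-verified Lean document; each statement's English description precedes it below -/
import Mathlib

section
/- The faces of the ordered-subset complex K_X(r) are exactly the subsets C ⊆ X such that C contains at most one of a₁, a₂, C does not contain all of {b₁,b₂,b₃}, and C does not contain all of {c₁,c₂,c₃}. (Hence K_X(r) is the simplicial join of a 0-sphere {a₁,a₂} and two triangle boundaries, a simplicial 4-sphere.) -/
/-- The 8-element set `X = {a₁,a₂,b₁,b₂,b₃,c₁,c₂,c₃}`. -/
inductive X8 : Type
  | a1 | a2 | b1 | b2 | b3 | c1 | c2 | c3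
  deriving DecidableEq

open X8

instance : Fintype X8 where
  elems := {a1, a2, b1, b2, b3, c1, c2, c3}
  complete := fun x => by cases x <;> simp

/-- The relation `r` on `X`: `r(aᵢ,bⱼ)`, `r(aᵢ,cⱼ)`, `r(bᵢ,cⱼ)` for all `i,j`;
`r(b₁,b₂), r(b₂,b₃), r(b₃,b₁)`; `r(c₁,c₂), r(c₂,c₃), r(c₃,c₁)`;
and no other pairs are related. -/
def rX8 : X8 → X8 → Prop
  | a1, b1 | a1, b2 | a1, b3 | a1, c1 | a1, c2 | a1, c3 => True
  | a2, b1 | a2, b2 | a2, b3 | a2, c1 | a2, c2 | a2, c3 => True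
  | b1, c1 | b1, c2 | b1, c3 | b2, c1 | b2, c2 | b2, c3 | b3, c1 | b3, c2 | b3, c3 => True
  | b1, b2 | b2, b3 | b3, b1 => True
  | c1, c2 | c2, c3 | c3, c1 => True
  | _, _ => False

instance : DecidableRel rX8 := fun x y => by
  unfold rX8; cases x <;> cases y <;> simp <;> infer_instance

/-- A finite subset `C ⊆ X` is *ordered* (i.e. a face of the ordered-subset complex
`K_X(r)`) if the restriction of `r` to `C` is a strict linear order. -/
def IsOrdered {X : Type*} (r : X → X → Prop) (C : Finset X) : Prop :=
  (∀ x ∈ C, ∀ y ∈ C, x ≠ y → (r x y ∨ r y x)) ∧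
  (∀ x ∈ C, ∀ y ∈ C, ¬ (r x y ∧ r y x)) ∧
  (∀ x ∈ C, ∀ y ∈ C, ∀ z ∈ C, r x y → r y z → r x z)

set_option synthInstance.maxSize 4000
set_option maxHeartbeats 4000000
set_option maxRecDepth 10000

/-- The faces of `K_X(r)` are exactly the subsets `C ⊆ X` containing
at most one of `a₁, a₂`, not all of `{b₁,b₂,b₃}`, and not all of `{c₁,c₂,c₃}`.
Hence `K_X(r)` is the join of a 0-sphere and two triangle boundaries: an `S⁴`. -/
theorem x8_faces_characterization :
    ∀ C : Finset X8,
      IsOrdered rX8 C ↔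
        ¬ (a1 ∈ C ∧ a2 ∈ C) ∧ ¬ ({b1, b2, b3} : Finset X8) ⊆ C ∧
          ¬ ({c1, c2, c3} : Finset X8) ⊆ C := by
  intro C
  unfold IsOrdered
  revert C
  decide
end

section
/- In Penney's game with patterns of length 3, the pattern 011 beats the pattern 110: μ{ω : T_{011}(ω) < T_{110}(ω)} > 1/2. -/
open MeasureTheory

/-- The first time the length-3 pattern `p` appears in the bit sequence `ω`
(as `ω n, ω (n+1), ω (n+2)`), or `∞` if it never appears. -/
noncomputable def hitTime (p : Bool × Bool × Bool) (ω : ℕ → Bool) : ℕ∞ :=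
  sInf ((fun n : ℕ => (n : ℕ∞)) '' {n : ℕ | (ω n, ω (n + 1), ω (n + 2)) = p})

/-- `μ` is the fair-coin measure on `ℕ → Bool`, i.e. the product over `ℕ` of the
uniform probability measure on `Bool`: it is characterized by giving each cylinder
set prescribing finitely many coordinates its uniform probability `(1/2)^#coords`. -/
def IsFairCoinMeasure (μ : Measure (ℕ → Bool)) : Prop :=
  ∀ (s : Finset ℕ) (v : ℕ → Bool),
    μ {ω : ℕ → Bool | ∀ i ∈ s, ω i = v i} = (1 / 2 : ENNReal) ^ s.card

/-- The winning event: the first occurrence of `11` is at some position `n` with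
`1 ≤ n ≤ 6`. -/
def Good (ω : ℕ → Bool) : Prop :=
  ∃ n, 1 ≤ n ∧ n ≤ 6 ∧ ω n = true ∧ ω (n+1) = true ∧ ∀ m < n, ω m = true → ω (m+1) = false

def ext8 (x : Fin 8 → Bool) : ℕ → Bool := fun i => if h : i < 8 then x ⟨i, h⟩ else false

instance : DecidablePred Good := fun ω =>
  decidable_of_iff (∃ n : Fin 7, 1 ≤ (n:ℕ) ∧ ω n = true ∧ ω ((n:ℕ)+1) = true ∧
      ∀ m < (n:ℕ), ω m = true → ω (m+1) = false)
    (by constructor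
        · rintro ⟨n, h1, h⟩; exact ⟨n, h1, Nat.lt_succ_iff.mp n.isLt, h⟩
        · rintro ⟨n, h1, h6, h⟩; exact ⟨⟨n, Nat.lt_succ_iff.mpr h6⟩, h1, h⟩)

lemma good_congr {ω ω' : ℕ → Bool} (h : ∀ i < 8, ω i = ω' i) : Good ω → Good ω' := by
  rintro ⟨n, h1, h6, hn, hn1, hno⟩
  refine ⟨n, h1, h6, ?_, ?_, ?_⟩
  · rw [← h n (by omega)]; exact hn
  · rw [← h (n+1) (by omega)]; exact hn1
  · intro m hm hmt
    rw [← h (m+1) (by omega)]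
    exact hno m hm (by rw [h m (by omega)]; exact hmt)

lemma good_subset :
    {ω : ℕ → Bool | Good ω} ⊆
      {ω : ℕ → Bool | hitTime (false, true, true) ω < hitTime (true, true, false) ω} := by
  rintro ω ⟨n, h1, h6, hn, hn1, hno⟩
  have hωn1 : ω (n-1) = false := by
    cases hb : ω (n-1)
    · rfl
    · have := hno (n-1) (by omega) hb
      rw [show n - 1 + 1 = n by omega] at this
      rw [hn] at this; exact absurd this (by simp)
  have hle : hitTime (false, true, true) ω ≤ ((n-1 : ℕ) : ℕ∞) := by
    apply sInf_le
    refine ⟨n-1, ?_, rfl⟩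
    simp only [Set.mem_setOf_eq, show n - 1 + 1 = n by omega, show n - 1 + 2 = n + 1 by omega]
    rw [hωn1, hn, hn1]
  have hge : ((n : ℕ) : ℕ∞) ≤ hitTime (true, true, false) ω := by
    apply le_sInf
    rintro b ⟨m, hm, rfl⟩
    simp only [Set.mem_setOf_eq, Prod.mk.injEq] at hm
    by_contra hlt
    push_neg at hlt
    have hmn : m < n := by exact_mod_cast hlt
    have := hno m hmn hm.1
    rw [hm.2.1] at this; exact absurd this (by simp)
  calc hitTime (false, true, true) ω ≤ ((n-1 : ℕ) : ℕ∞) := hle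
    _ < ((n : ℕ) : ℕ∞) := by exact_mod_cast Nat.sub_lt (by omega) one_pos
    _ ≤ hitTime (true, true, false) ω := hge

/-- cylinder set on the first 8 coordinates -/
def cyl (x : Fin 8 → Bool) : Set (ℕ → Bool) := {ω | ∀ i : Fin 8, ω i = x i}

lemma cyl_measurable (x : Fin 8 → Bool) : MeasurableSet (cyl x) := by
  have : cyl x = ⋂ i : Fin 8, (fun ω : ℕ → Bool => ω (i : ℕ)) ⁻¹' {x i} := by
    ext ω; simp [cyl]
  rw [this]
  exact MeasurableSet.iInter fun i =>
    (measurable_pi_apply (i : ℕ)) (measurableSet_singleton (x i))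

lemma cyl_measure {μ : Measure (ℕ → Bool)} (hμ : IsFairCoinMeasure μ) (x : Fin 8 → Bool) :
    μ (cyl x) = (1/2 : ENNReal) ^ 8 := by
  have h := hμ (Finset.range 8) (ext8 x)
  rw [Finset.card_range] at h
  rw [← h]
  congr 1
  ext ω
  simp only [cyl, Set.mem_setOf_eq, Finset.mem_range]
  constructor
  · intro hh i hi
    rw [hh ⟨i, hi⟩, ext8, dif_pos hi]
  · intro hh i
    rw [hh i i.isLt, ext8, dif_pos i.isLt]

lemma good_eq_union :
    {ω : ℕ → Bool | Good ω} =
      ⋃ x ∈ Finset.univ.filter (fun x : Fin 8 → Bool => Good (ext8 x)), cyl x := by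
  ext ω
  simp only [Set.mem_setOf_eq, Set.mem_iUnion, Finset.mem_filter, Finset.mem_univ, true_and]
  constructor
  · intro hg
    refine ⟨fun i => ω i, ?_, fun i => rfl⟩
    apply good_congr (ω := ω) _ hg
    intro i hi
    simp [ext8, dif_pos hi]
  · rintro ⟨x, hx, hc⟩
    apply good_congr (ω := ext8 x) _ hx
    intro i hi
    rw [ext8]; rw [dif_pos hi, hc ⟨i, hi⟩]

/-- In Penney's game with patterns of length 3, the pattern `011`
beats the pattern `110`: `μ {ω | T_011 ω < T_110 ω} > 1/2`. -/
theorem penney_011_beats_110 (μ : Measure (ℕ → Bool)) (hμ : IsFairCoinMeasure μ) :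
    μ {ω : ℕ → Bool | hitTime (false, true, true) ω < hitTime (true, true, false) ω}
      > 1 / 2 := by
  have hcard : (Finset.univ.filter (fun x : Fin 8 → Bool => Good (ext8 x))).card = 137 := by
    set_option maxRecDepth 10000 in decide
  set T := Finset.univ.filter (fun x : Fin 8 → Bool => Good (ext8 x)) with hT
  have hdisj : (T : Set (Fin 8 → Bool)).PairwiseDisjoint cyl := by
    intro x _ y _ hxy
    rw [Function.onFun, Set.disjoint_left]
    intro ω hx hy
    exact hxy (funext fun i => by rw [← hx i, ← hy i])
  have hmA : μ {ω : ℕ → Bool | Good ω} = 137 * (1/2 : ENNReal) ^ 8 := by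
    rw [good_eq_union, measure_biUnion_finset hdisj (fun x _ => cyl_measurable x)]
    simp only [cyl_measure hμ]
    rw [Finset.sum_const, hcard, nsmul_eq_mul]
    norm_num
  have hmono : μ {ω : ℕ → Bool | Good ω} ≤
      μ {ω : ℕ → Bool | hitTime (false, true, true) ω < hitTime (true, true, false) ω} :=
    measure_mono good_subset
  have hlt : (1/2 : ENNReal) < 137 * (1/2 : ENNReal) ^ 8 := by
    rw [show ((1:ENNReal)/2) = 2⁻¹ by rw [one_div]]
    have e1 : (2:ENNReal)⁻¹ * 2^8 = 128 := by
      rw [show ((2:ENNReal)^8) = 2 * 128 by norm_num, ← mul_assoc,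
        ENNReal.inv_mul_cancel (by norm_num) (by norm_num), one_mul]
    have e2 : (137:ENNReal) * 2⁻¹^8 * 2^8 = 137 := by
      rw [← ENNReal.inv_pow, mul_assoc,
        ENNReal.inv_mul_cancel (by norm_num) (by norm_num), mul_one]
    exact (ENNReal.mul_lt_mul_iff_left (c := 2^8) (by norm_num) (by norm_num)).mp
      (by rw [e1, e2]; norm_num)
  calc (1/2 : ENNReal) < 137 * (1/2 : ENNReal) ^ 8 := hlt
    _ = μ {ω : ℕ → Bool | Good ω} := hmA.symm
    _ ≤ _ := hmono
end
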